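/- Let ξ : ℤ → {0,1} be a Toeplitz sequence with period structure (p_ℓ)_{ℓ≥1}, Ω the associated odometer with Haar probability measure μ, and U, V the sets constructed from ξ. Then μ(U ∪ V) = lim_{ℓ→∞} D(p_ℓ) = sup_{ℓ} D(p_ℓ). -/

import Mathlib

open MeasureTheory Set Filter Topology

noncomputable section

instance (n : ℕ) : TopologicalSpace (ZMod n) := ⊥
instance (n : ℕ) : DiscreteTopology (ZMod n) := ⟨rfl⟩
instance (n : ℕ) : MeasurableSpace (ZMod n) := ⊤

/-- The `p`-skeleton of a sequence `ξ : ℤ → {0,1}`: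
the set of `p`-periodic positions of `ξ`. -/
def Per (ξ : ℤ → Fin 2) (p : ℕ) : Set ℤ := {k | ∀ n : ℤ, ξ (k + n * p) = ξ k}

/-- The density `D(p)` of the `p`-skeleton:
`D(p) = #(Per(p,ξ) ∩ [0, p-1]) / p`. -/
def skelDensity (ξ : ℤ → Fin 2) (p : ℕ) : ℝ :=
  ((Per ξ p ∩ Set.Ico (0 : ℤ) (p : ℤ)).ncard : ℝ) / p

/-- `ξ` is a Toeplitz sequence: every position is periodic for some period `p ≥ 1`. -/
def IsToeplitz (ξ : ℤ → Fin 2) : Prop := ∀ k : ℤ, ∃ p : ℕ, 0 < p ∧ k ∈ Per ξ p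

/-- `ξ` is non-periodic: no `p ≥ 1` is a period of the whole sequence. -/
def IsNonPeriodic (ξ : ℤ → Fin 2) : Prop := ∀ p : ℕ, 0 < p → ∃ k : ℤ, ξ (k + p) ≠ ξ k

/-- `(p ℓ)` is a period structure for `ξ`: the `p ℓ` are positive, each divides the
next, and the `p ℓ`-skeletons exhaust `ℤ`. -/
def IsPeriodStructure (ξ : ℤ → Fin 2) (p : ℕ → ℕ) : Prop :=
  (∀ ℓ, 0 < p ℓ) ∧ (∀ ℓ, p ℓ ∣ p (ℓ + 1)) ∧ ∀ k : ℤ, ∃ ℓ, k ∈ Per ξ (p ℓ)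

/-- The odometer associated with a scale `p`, i.e. the closed subgroup of
`∏ ℓ, ℤ/p ℓ ℤ` of sequences compatible under the canonical projections
(whenever `p ℓ ∣ p (ℓ+1)`, which holds for period structures). -/
def odometer (p : ℕ → ℕ) : AddSubgroup (Π ℓ, ZMod (p ℓ)) where
  carrier := {x | ∀ ℓ, ∀ h : p ℓ ∣ p (ℓ + 1), ZMod.castHom h (ZMod (p ℓ)) (x (ℓ + 1)) = x ℓ}
  zero_mem' := by intro ℓ _; simp
  add_mem' := by intro a b ha hb ℓ h; simp only [Pi.add_apply, map_add, ha ℓ h, hb ℓ h]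
  neg_mem' := by intro a ha ℓ h; simp only [Pi.neg_apply, map_neg, ha ℓ h]

/-- The distinguished element `e` of the odometer, whose `ℓ`-th coordinate is
`1 mod p ℓ`; its `n`-th multiple `n • e` has `ℓ`-th coordinate `n mod p ℓ`. -/
def odometerGen (p : ℕ → ℕ) : odometer p := ⟨fun _ => 1, fun _ _ => map_one _⟩

/-- `A_s(ℓ) = {k mod p ℓ : k ∈ Per (p ℓ, ξ), ξ k = s} ⊆ ℤ/p ℓ ℤ`. -/
def Aset (ξ : ℤ → Fin 2) (p : ℕ → ℕ) (ℓ : ℕ) (s : Fin 2) : Set (ZMod (p ℓ)) :=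
  {c | ∃ k : ℤ, k ∈ Per ξ (p ℓ) ∧ ξ k = s ∧ (k : ZMod (p ℓ)) = c}

/-- `U_ℓ = {x ∈ Ω : x ℓ ∈ A_1(ℓ)}`. -/
def UsetL (ξ : ℤ → Fin 2) (p : ℕ → ℕ) (ℓ : ℕ) : Set (odometer p) :=
  {x | (x : Π ℓ, ZMod (p ℓ)) ℓ ∈ Aset ξ p ℓ 1}

/-- `V_ℓ = {x ∈ Ω : x ℓ ∈ A_0(ℓ)}`. -/
def VsetL (ξ : ℤ → Fin 2) (p : ℕ → ℕ) (ℓ : ℕ) : Set (odometer p) :=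
  {x | (x : Π ℓ, ZMod (p ℓ)) ℓ ∈ Aset ξ p ℓ 0}

/-- `U = ⋃ ℓ, U_ℓ`. -/
def Uset (ξ : ℤ → Fin 2) (p : ℕ → ℕ) : Set (odometer p) := ⋃ ℓ, UsetL ξ p ℓ

/-- `V = ⋃ ℓ, V_ℓ`. -/
def Vset (ξ : ℤ → Fin 2) (p : ℕ → ℕ) : Set (odometer p) := ⋃ ℓ, VsetL ξ p ℓ

/-- The window `W = cl(U)` constructed from `ξ`. -/
def Wset (ξ : ℤ → Fin 2) (p : ℕ → ℕ) : Set (odometer p) := closure (Uset ξ p)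

/-! ### Auxiliary lemmas -/

lemma fin2_cases (s : Fin 2) : s = 0 ∨ s = 1 := by revert s; decide

lemma per_shift {ξ : ℤ → Fin 2} {q : ℕ} {k : ℤ} (hk : k ∈ Per ξ q) (n : ℤ) :
    k + n * q ∈ Per ξ q := by
  intro m
  have h : k + n * (q : ℤ) + m * q = k + (n + m) * q := by ring
  rw [h, hk (n + m), hk n]

lemma per_mono {ξ : ℤ → Fin 2} {a b : ℕ} (h : a ∣ b) : Per ξ a ⊆ Per ξ b := by
  obtain ⟨d, rfl⟩ := h
  intro k hk n
  have h : k + n * ((a * d : ℕ) : ℤ) = k + (n * d) * a := by push_cast; ring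
  rw [h, hk (n * d)]

/-- `B(ℓ) = {k mod p ℓ : k ∈ Per (p ℓ, ξ)} = A_0(ℓ) ∪ A_1(ℓ)`. -/
def Bset (ξ : ℤ → Fin 2) (p : ℕ → ℕ) (ℓ : ℕ) : Set (ZMod (p ℓ)) :=
  (fun k : ℤ => (k : ZMod (p ℓ))) '' Per ξ (p ℓ)

/-- `T_ℓ = U_ℓ ∪ V_ℓ`. -/
def Tset (ξ : ℤ → Fin 2) (p : ℕ → ℕ) (ℓ : ℕ) : Set (odometer p) :=
  {x | (x : Π m, ZMod (p m)) ℓ ∈ Bset ξ p ℓ}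

lemma aset_union (ξ : ℤ → Fin 2) (p : ℕ → ℕ) (ℓ : ℕ) :
    Aset ξ p ℓ 0 ∪ Aset ξ p ℓ 1 = Bset ξ p ℓ := by
  ext c
  constructor
  · rintro (⟨k, hk, -, rfl⟩ | ⟨k, hk, -, rfl⟩) <;> exact ⟨k, hk, rfl⟩
  · rintro ⟨k, hk, rfl⟩
    rcases fin2_cases (ξ k) with h | h
    · exact Or.inl ⟨k, hk, h, rfl⟩
    · exact Or.inr ⟨k, hk, h, rfl⟩

lemma tset_eq (ξ : ℤ → Fin 2) (p : ℕ → ℕ) (ℓ : ℕ) :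
    UsetL ξ p ℓ ∪ VsetL ξ p ℓ = Tset ξ p ℓ := by
  ext x
  have := aset_union ξ p ℓ
  simp only [UsetL, VsetL, Tset, Set.mem_union, Set.mem_setOf_eq, ← this]
  tauto

lemma tset_monotone (ξ : ℤ → Fin 2) (p : ℕ → ℕ) (hpos : ∀ ℓ, 0 < p ℓ)
    (hdvd : ∀ ℓ, p ℓ ∣ p (ℓ + 1)) : Monotone (Tset ξ p) := by
  apply monotone_nat_of_le_succ
  intro ℓ x hx
  haveI : NeZero (p (ℓ + 1)) := ⟨(hpos (ℓ + 1)).ne'⟩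
  obtain ⟨k, hk, hck⟩ := hx
  set m : ℤ := (((x : Π m, ZMod (p m)) (ℓ + 1)).val : ℤ) with hm
  have hm1 : (m : ZMod (p (ℓ + 1))) = (x : Π m, ZMod (p m)) (ℓ + 1) := by
    rw [hm]
    push_cast
    rw [ZMod.natCast_val, ZMod.cast_id]
  have hm2 : (m : ZMod (p ℓ)) = (x : Π m, ZMod (p m)) ℓ := by
    have hx2 := x.2 ℓ (hdvd ℓ)
    rw [← hx2, ← hm1, map_intCast]
  have hkm : ((p ℓ : ℤ)) ∣ m - k := by
    have hmk : (m : ZMod (p ℓ)) = (k : ZMod (p ℓ)) := by rw [hm2]; exact hck.symm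
    have h := (ZMod.intCast_eq_intCast_iff _ _ _).mp hmk
    exact h.symm.dvd
  obtain ⟨t, ht⟩ := hkm
  have hmPer : m ∈ Per ξ (p ℓ) := by
    have hmeq : m = k + t * (p ℓ : ℤ) := by linarith
    rw [hmeq]
    exact per_shift hk t
  exact ⟨m, per_mono (hdvd ℓ) hmPer, hm1⟩

lemma measure_fiber (p : ℕ → ℕ) (hp : ∀ ℓ, 0 < p ℓ) (μ : Measure (odometer p))
    (hμ : μ.IsAddHaarMeasure) (hμ1 : IsProbabilityMeasure μ) (ℓ : ℕ) (c : ZMod (p ℓ)) :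
    μ {x : odometer p | (x : Π m, ZMod (p m)) ℓ = c} = ((p ℓ : ENNReal))⁻¹ := by
  haveI : NeZero (p ℓ) := ⟨(hp ℓ).ne'⟩
  set S : ZMod (p ℓ) → Set (odometer p) :=
    fun c => {x : odometer p | (x : Π m, ZMod (p m)) ℓ = c} with hS
  have hmeasproj : Measurable fun x : odometer p => (x : Π m, ZMod (p m)) ℓ :=
    (measurable_pi_apply ℓ).comp measurable_subtype_coe
  have hmeas : ∀ d, MeasurableSet (S d) := fun d =>
    hmeasproj (measurableSet_singleton d)
  have hgen : ∀ n : ℤ, ((n • odometerGen p : odometer p) : Π m, ZMod (p m)) ℓ = (n : ZMod (p ℓ)) := by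
    intro n
    have : ((n • odometerGen p : odometer p) : Π m, ZMod (p m))
        = n • ((odometerGen p : odometer p) : Π m, ZMod (p m)) := rfl
    rw [this]
    simp only [Pi.smul_apply, odometerGen]
    rw [zsmul_eq_mul, mul_one]
  have key : ∀ c d : ZMod (p ℓ), μ (S c) = μ (S d) := by
    intro c d
    set g : odometer p := (((d - c).val : ℤ)) • odometerGen p with hg
    have hgl : (g : Π m, ZMod (p m)) ℓ = d - c := by
      rw [hg, hgen]
      push_cast
      rw [ZMod.natCast_val, ZMod.cast_id]
    have hpre : (fun x : odometer p => g + x) ⁻¹' S d = S c := by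
      ext x
      simp only [hS, Set.mem_preimage, Set.mem_setOf_eq]
      have : ((g + x : odometer p) : Π m, ZMod (p m)) ℓ
          = (g : Π m, ZMod (p m)) ℓ + (x : Π m, ZMod (p m)) ℓ := rfl
      rw [this, hgl]
      constructor
      · intro h
        have := congrArg (fun z => z - (d - c)) h
        simpa using this
      · intro h
        rw [h]
        ring
    have hmg : Measurable fun x : odometer p => g + x := by
      have h1 : Measurable fun x : odometer p =>
          ((g : Π m, ZMod (p m)) + (x : Π m, ZMod (p m))) := by
        apply measurable_pi_lambda
        intro m
        exact measurable_from_top.comp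
          ((measurable_pi_apply m).comp measurable_subtype_coe)
      exact h1.subtype_mk
    haveI := hμ.toIsAddLeftInvariant
    calc μ (S c) = μ ((fun x : odometer p => g + x) ⁻¹' S d) := by rw [hpre]
      _ = (μ.map (fun x : odometer p => g + x)) (S d) := (Measure.map_apply hmg (hmeas d)).symm
      _ = μ (S d) := by rw [MeasureTheory.map_add_left_eq_self μ g]
  have hdisj : Pairwise (Function.onFun Disjoint S) := by
    intro a b hab
    refine Set.disjoint_left.mpr ?_
    intro x hxa hxb
    exact hab (hxa ▸ hxb ▸ rfl)
  have hcover : ⋃ d, S d = Set.univ := by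
    ext x
    simp [hS]
  have hsum : ∑ d : ZMod (p ℓ), μ (S d) = 1 := by
    rw [← tsum_fintype (L := SummationFilter.unconditional _), ← measure_iUnion hdisj hmeas, hcover, measure_univ]
  have hconst : ∀ d ∈ (Finset.univ : Finset (ZMod (p ℓ))), μ (S d) = μ (S c) :=
    fun d _ => key d c
  rw [Finset.sum_congr rfl hconst, Finset.sum_const] at hsum
  have hcard : (Finset.univ : Finset (ZMod (p ℓ))).card = p ℓ := by
    simpa using ZMod.card (p ℓ)
  rw [hcard] at hsum
  have hmul : (p ℓ : ENNReal) * μ (S c) = 1 := by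
    rw [← hsum, nsmul_eq_mul]
  have hpne : (p ℓ : ENNReal) ≠ 0 := by
    exact_mod_cast (hp ℓ).ne'
  have hpnt : (p ℓ : ENNReal) ≠ ⊤ := ENNReal.natCast_ne_top _
  have : μ (S c) = 1 / (p ℓ : ENNReal) := (ENNReal.eq_div_iff hpne hpnt).mpr hmul
  rw [this, one_div]

lemma measure_coord_mem (p : ℕ → ℕ) (hp : ∀ ℓ, 0 < p ℓ) (μ : Measure (odometer p))
    (hμ : μ.IsAddHaarMeasure) (hμ1 : IsProbabilityMeasure μ) (ℓ : ℕ) (A : Set (ZMod (p ℓ))) :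
    μ {x : odometer p | (x : Π m, ZMod (p m)) ℓ ∈ A}
      = (A.ncard : ENNReal) * ((p ℓ : ENNReal))⁻¹ := by
  haveI : NeZero (p ℓ) := ⟨(hp ℓ).ne'⟩
  have hA : A.Finite := A.toFinite
  have hmeasproj : Measurable fun x : odometer p => (x : Π m, ZMod (p m)) ℓ :=
    (measurable_pi_apply ℓ).comp measurable_subtype_coe
  have hsplit : {x : odometer p | (x : Π m, ZMod (p m)) ℓ ∈ A}
      = ⋃ c ∈ hA.toFinset, {x : odometer p | (x : Π m, ZMod (p m)) ℓ = c} := by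
    ext x
    simp
  rw [hsplit, measure_biUnion_finset ?_ ?_]
  · rw [Finset.sum_congr rfl fun c _ => measure_fiber p hp μ hμ hμ1 ℓ c,
      Finset.sum_const, nsmul_eq_mul]
    congr 1
    rw [Set.ncard_eq_toFinset_card _ hA]
  · intro a _ b _ hab
    refine Set.disjoint_left.mpr ?_
    intro x hxa hxb
    exact hab (hxa ▸ hxb ▸ rfl)
  · intro c _
    exact hmeasproj (measurableSet_singleton c)

lemma bset_ncard (ξ : ℤ → Fin 2) (p : ℕ → ℕ) (ℓ : ℕ) (hp : 0 < p ℓ) :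
    (Bset ξ p ℓ).ncard = (Per ξ (p ℓ) ∩ Set.Ico (0 : ℤ) ((p ℓ : ℤ))).ncard := by
  have hq : (0 : ℤ) < (p ℓ : ℤ) := by exact_mod_cast hp
  have himg : Bset ξ p ℓ
      = (fun k : ℤ => (k : ZMod (p ℓ))) '' (Per ξ (p ℓ) ∩ Set.Ico (0 : ℤ) ((p ℓ : ℤ))) := by
    apply subset_antisymm
    · rintro c ⟨k, hk, rfl⟩
      refine ⟨k % (p ℓ : ℤ), ⟨?_, Int.emod_nonneg k hq.ne', Int.emod_lt_of_pos k hq⟩, ?_⟩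
      · have hmod : k % (p ℓ : ℤ) = k + (-(k / (p ℓ : ℤ))) * (p ℓ : ℤ) := by
          rw [Int.emod_def]; ring
        rw [hmod]
        exact per_shift hk _
      · rw [ZMod.intCast_eq_intCast_iff]
        exact Int.emod_emod_of_dvd k dvd_rfl
    · exact Set.image_mono Set.inter_subset_left
  rw [himg]
  apply Set.ncard_image_of_injOn
  intro a ha b hb hab
  rw [ZMod.intCast_eq_intCast_iff] at hab
  have h2 := hab
  unfold Int.ModEq at h2
  rwa [Int.emod_eq_of_lt ha.2.1 ha.2.2, Int.emod_eq_of_lt hb.2.1 hb.2.2] at h2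

/-- For a Toeplitz sequence `ξ` with period structure `(p ℓ)` and
the Haar probability measure `μ` of the associated odometer:
`μ (U ∪ V) = lim_ℓ D(p ℓ) = sup_ℓ D(p ℓ)`. -/
theorem toeplitz_measure_UV (ξ : ℤ → Fin 2) (hT : IsToeplitz ξ)
    (p : ℕ → ℕ) (hps : IsPeriodStructure ξ p)
    (μ : Measure (odometer p)) (hμ : μ.IsAddHaarMeasure) (hμ1 : IsProbabilityMeasure μ) :
    ∃ L : ℝ, Tendsto (fun ℓ => skelDensity ξ (p ℓ)) atTop (𝓝 L) ∧
      μ (Uset ξ p ∪ Vset ξ p) = ENNReal.ofReal L ∧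
      L = ⨆ ℓ, skelDensity ξ (p ℓ) := by
  obtain ⟨hpos, hdvd, hcov⟩ := hps
  have hmeasT : ∀ ℓ, μ (Tset ξ p ℓ) = ENNReal.ofReal (skelDensity ξ (p ℓ)) := by
    intro ℓ
    have h1 : μ (Tset ξ p ℓ)
        = ((Bset ξ p ℓ).ncard : ENNReal) * ((p ℓ : ENNReal))⁻¹ :=
      measure_coord_mem p hpos μ hμ hμ1 ℓ (Bset ξ p ℓ)
    rw [h1, bset_ncard ξ p ℓ (hpos ℓ), skelDensity,
      ENNReal.ofReal_div_of_pos (by exact_mod_cast hpos ℓ)]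
    rw [ENNReal.ofReal_natCast, ENNReal.ofReal_natCast, div_eq_mul_inv]
  have hmono : Monotone (Tset ξ p) := tset_monotone ξ p hpos hdvd
  have hDnonneg : ∀ ℓ, 0 ≤ skelDensity ξ (p ℓ) := fun ℓ =>
    div_nonneg (Nat.cast_nonneg _) (Nat.cast_nonneg _)
  have hDmono : Monotone fun ℓ => skelDensity ξ (p ℓ) := by
    intro a b hab
    have h := measure_mono (μ := μ) (hmono hab)
    rw [hmeasT a, hmeasT b] at h
    exact (ENNReal.ofReal_le_ofReal_iff (hDnonneg b)).mp h
  have hDle : ∀ ℓ, skelDensity ξ (p ℓ) ≤ 1 := by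
    intro ℓ
    have h1 : μ (Tset ξ p ℓ) ≤ 1 := by
      simpa using measure_mono (μ := μ) (Set.subset_univ (Tset ξ p ℓ))
    rw [hmeasT ℓ] at h1
    exact ENNReal.ofReal_le_one.mp h1
  have hbdd : BddAbove (Set.range fun ℓ => skelDensity ξ (p ℓ)) :=
    ⟨1, by rintro _ ⟨ℓ, rfl⟩; exact hDle ℓ⟩
  have hsup := tendsto_atTop_ciSup hDmono hbdd
  refine ⟨⨆ ℓ, skelDensity ξ (p ℓ), hsup, ?_, rfl⟩
  have hUV : Uset ξ p ∪ Vset ξ p = ⋃ ℓ, Tset ξ p ℓ := by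
    rw [Uset, Vset, ← Set.iUnion_union_distrib]
    exact Set.iUnion_congr fun ℓ => tset_eq ξ p ℓ
  have h1 : Tendsto (fun ℓ => μ (Tset ξ p ℓ)) atTop (𝓝 (μ (⋃ ℓ, Tset ξ p ℓ))) :=
    tendsto_measure_iUnion_atTop hmono
  have h2 : Tendsto (fun ℓ => μ (Tset ξ p ℓ)) atTop
      (𝓝 (ENNReal.ofReal (⨆ ℓ, skelDensity ξ (p ℓ)))) := by
    simp only [hmeasT]
    exact (ENNReal.continuous_ofReal.tendsto _).comp hsup
  rw [hUV]
  exact tendsto_nhds_unique h1 h2
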